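/- Gentle Measurement Lemma: for every density matrix ρ and every operator X with 0 ⪯ X ⪯ I on a finite-dimensional Hilbert space, ‖ρ − √X ρ √X‖₁ ≤ 2√(Tr(ρ(I − X))). -/

import Mathlib

open Matrix ComplexOrder

/-- The positive semidefinite square root of a positive semidefinite matrix
(the definition removed from Mathlib, restored verbatim). -/
noncomputable def Matrix.PosSemidef.sqrt {n 𝕜 : Type*} [Fintype n] [DecidableEq n] [RCLike 𝕜]
    {A : Matrix n n 𝕜} (hA : A.PosSemidef) : Matrix n n 𝕜 :=
  hA.1.eigenvectorUnitary.1 * diagonal ((↑) ∘ (√·) ∘ hA.1.eigenvalues) *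
    (star hA.1.eigenvectorUnitary : Matrix n n 𝕜)

section SqrtPort

open scoped MatrixOrder

lemma Matrix.PosSemidef.sqrt_eq_cfc {n 𝕜 : Type*} [Fintype n] [DecidableEq n] [RCLike 𝕜]
    {A : Matrix n n 𝕜} (hA : A.PosSemidef) : hA.sqrt = CFC.sqrt A := by
  rw [CFC.sqrt_eq_cfc, cfc_nnreal_eq_real _ A, hA.1.cfc_eq]
  simp only [IsHermitian.cfc, Matrix.PosSemidef.sqrt, Unitary.conjStarAlgAut_apply]
  congr 3
  funext i
  simp [Real.coe_sqrt, Real.coe_toNNReal _ (hA.eigenvalues_nonneg i),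
    max_eq_left (hA.eigenvalues_nonneg i)]

lemma Matrix.PosSemidef.posSemidef_sqrt {n 𝕜 : Type*} [Fintype n] [DecidableEq n] [RCLike 𝕜]
    {A : Matrix n n 𝕜} (hA : A.PosSemidef) : hA.sqrt.PosSemidef := by
  rw [hA.sqrt_eq_cfc]
  exact (CFC.sqrt_nonneg A).posSemidef

lemma Matrix.PosSemidef.sqrt_mul_self {n 𝕜 : Type*} [Fintype n] [DecidableEq n] [RCLike 𝕜]
    {A : Matrix n n 𝕜} (hA : A.PosSemidef) : hA.sqrt * hA.sqrt = A := by
  rw [hA.sqrt_eq_cfc]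
  exact CFC.sqrt_mul_sqrt_self A hA.nonneg

lemma Matrix.PosSemidef.eq_sqrt_of_sq_eq {n 𝕜 : Type*} [Fintype n] [DecidableEq n] [RCLike 𝕜]
    {A B : Matrix n n 𝕜} (hB : B.PosSemidef) (hA : A.PosSemidef) (h : B ^ 2 = A) :
    B = hA.sqrt := by
  rw [hA.sqrt_eq_cfc]
  exact (CFC.sqrt_unique (by rw [← sq]; exact h) hB.nonneg).symm

end SqrtPort

/-- Trace norm of a complex matrix: trace of the positive square root of `Mᴴ * M`. -/
noncomputable def traceNorm {n : Type*} [Fintype n] [DecidableEq n] (M : Matrix n n ℂ) : ℝ :=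
  ((Matrix.posSemidef_conjTranspose_mul_self M).sqrt.trace).re

set_option linter.unusedSectionVars false

namespace GentleAux

variable {n : Type*} [Fintype n] [DecidableEq n]

/-- Functional calculus on a Hermitian matrix via its spectral decomposition. -/
noncomputable def fm {A : Matrix n n ℂ} (hA : A.IsHermitian) (f : ℝ → ℝ) : Matrix n n ℂ :=
  (hA.eigenvectorUnitary : Matrix n n ℂ) *
    diagonal (fun i => (f (hA.eigenvalues i) : ℂ)) *
    star (hA.eigenvectorUnitary : Matrix n n ℂ)

variable {A : Matrix n n ℂ} (hA : A.IsHermitian)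

lemma star_mul_self_unitary :
    star (hA.eigenvectorUnitary : Matrix n n ℂ) * (hA.eigenvectorUnitary : Matrix n n ℂ) = 1 :=
  mem_unitaryGroup_iff'.mp hA.eigenvectorUnitary.2

lemma fm_mul (f g : ℝ → ℝ) : fm hA f * fm hA g = fm hA (fun x => f x * g x) := by
  unfold fm
  simp only [mul_assoc]
  rw [← mul_assoc (star (hA.eigenvectorUnitary : Matrix n n ℂ)), star_mul_self_unitary, one_mul,
    ← mul_assoc (diagonal _), diagonal_mul_diagonal]
  push_cast
  ring_nf

lemma fm_congr {f g : ℝ → ℝ} (h : ∀ i, f (hA.eigenvalues i) = g (hA.eigenvalues i)) :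
    fm hA f = fm hA g := by
  unfold fm
  simp only [h]

lemma fm_id : fm hA (fun x => x) = A := by
  conv_rhs => rw [hA.spectral_theorem]
  rfl

lemma fm_one : fm hA (fun _ => 1) = 1 := by
  unfold fm
  simp [mul_assoc, mem_unitaryGroup_iff.mp hA.eigenvectorUnitary.2]

lemma fm_sub (f g : ℝ → ℝ) : fm hA f - fm hA g = fm hA (fun x => f x - g x) := by
  unfold fm
  rw [← sub_mul, ← mul_sub, diagonal_sub]
  push_cast
  ring_nf

lemma fm_posSemidef {f : ℝ → ℝ} (h : ∀ i, 0 ≤ f (hA.eigenvalues i)) :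
    (fm hA f).PosSemidef := by
  unfold fm
  have hd : (diagonal (fun i => (f (hA.eigenvalues i) : ℂ))).PosSemidef :=
    posSemidef_diagonal_iff.mpr fun i => by
      simpa using Complex.zero_le_real.mpr (h i)
  simpa [star_eq_conjTranspose] using hd.mul_mul_conjTranspose_same (hA.eigenvectorUnitary : Matrix n n ℂ)

lemma fm_trace (f : ℝ → ℝ) : (fm hA f).trace = ∑ i, (f (hA.eigenvalues i) : ℂ) := by
  unfold fm
  rw [trace_mul_cycle, star_mul_self_unitary, one_mul, trace_diagonal]

lemma fm_isHermitian (f : ℝ → ℝ) : (fm hA f).IsHermitian := by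
  have hd : (diagonal (fun i => (f (hA.eigenvalues i) : ℂ))).IsHermitian :=
    isHermitian_diagonal_of_self_adjoint _
      (funext fun i => by simp [Pi.star_apply, Complex.conj_ofReal])
  have := isHermitian_mul_mul_conjTranspose (hA.eigenvectorUnitary : Matrix n n ℂ) hd
  simpa [fm, star_eq_conjTranspose] using this

/-- If `fm hA f` is PSD then `f` is nonneg on the eigenvalues. -/
lemma fm_eig_nonneg {f : ℝ → ℝ} (h : (fm hA f).PosSemidef) :
    ∀ i, 0 ≤ f (hA.eigenvalues i) := by
  intro i
  have h2 : (diagonal (fun i => (f (hA.eigenvalues i) : ℂ))).PosSemidef := by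
    have := h.mul_mul_conjTranspose_same (star (hA.eigenvectorUnitary : Matrix n n ℂ))
    simp only [fm, star_eq_conjTranspose, conjTranspose_conjTranspose] at this
    rw [show ((hA.eigenvectorUnitary : Matrix n n ℂ))ᴴ *
        ((hA.eigenvectorUnitary : Matrix n n ℂ) * diagonal (fun i => (f (hA.eigenvalues i) : ℂ)) *
          ((hA.eigenvectorUnitary : Matrix n n ℂ))ᴴ) * (hA.eigenvectorUnitary : Matrix n n ℂ)
        = diagonal (fun i => (f (hA.eigenvalues i) : ℂ)) from ?_] at this
    · exact this
    · rw [show ((hA.eigenvectorUnitary : Matrix n n ℂ))ᴴ = star (hA.eigenvectorUnitary : Matrix n n ℂ) from rfl]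
      simp only [mul_assoc]
      rw [← mul_assoc (star (hA.eigenvectorUnitary : Matrix n n ℂ)), star_mul_self_unitary,
        one_mul, mul_one]
  have := posSemidef_diagonal_iff.mp h2 i
  exact_mod_cast Complex.zero_le_real.mp (by exact_mod_cast this)


/-- The PSD square root is the functional calculus of `Real.sqrt`. -/
lemma sqrt_eq_fm {X : Matrix n n ℂ} (hX : X.PosSemidef) :
    hX.sqrt = fm hX.1 Real.sqrt := by
  refine ((fm_posSemidef hX.1 fun i => Real.sqrt_nonneg _).eq_sqrt_of_sq_eq hX ?_).symm
  rw [pow_two, fm_mul]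
  rw [fm_congr hX.1 (g := fun x => x) fun i => ?_, fm_id]
  exact Real.mul_self_sqrt (hX.eigenvalues_nonneg i)

/-- trace of a product of two PSD matrices is a nonneg real. -/
lemma trace_mul_psd {A B : Matrix n n ℂ} (hA : A.PosSemidef) (hB : B.PosSemidef) :
    0 ≤ (A * B).trace := by
  have h1 : A * B = A * (hB.sqrt * hB.sqrt) := by rw [hB.sqrt_mul_self]
  have h2 : (A * (hB.sqrt * hB.sqrt)).trace = (hB.sqrt * A * hB.sqrt).trace := by
    rw [← mul_assoc, trace_mul_cycle]
  have h3 : (hB.sqrt * A * hB.sqrt).PosSemidef := by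
    have := hA.mul_mul_conjTranspose_same hB.sqrt
    rwa [hB.posSemidef_sqrt.1.eq] at this
  rw [h1, h2]
  -- trace of PSD matrix is nonneg
  have : ∀ i, 0 ≤ (hB.sqrt * A * hB.sqrt) i i := fun i => by
    exact h3.diag_nonneg
  exact Finset.sum_nonneg fun i _ => this i

lemma trace_mul_psd_re {A B : Matrix n n ℂ} (hA : A.PosSemidef) (hB : B.PosSemidef) :
    0 ≤ ((A * B).trace).re :=
  (Complex.le_def.mp (trace_mul_psd hA hB)).1

/-- Loewner monotonicity of the trace against a PSD matrix. -/
lemma trace_mono {C D ρ : Matrix n n ℂ} (h : (D - C).PosSemidef) (hρ : ρ.PosSemidef) :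
    ((C * ρ).trace).re ≤ ((D * ρ).trace).re := by
  have := trace_mul_psd_re h hρ
  rw [sub_mul, trace_sub, Complex.sub_re] at this
  linarith

/-- Cauchy–Schwarz for the Frobenius inner product. -/
lemma trace_cs (A B : Matrix n n ℂ) :
    ‖(Aᴴ * B).trace‖ ≤ Real.sqrt ((Aᴴ * A).trace.re) * Real.sqrt ((Bᴴ * B).trace.re) := by
  have htr : ∀ M N : Matrix n n ℂ, (Mᴴ * N).trace = ∑ p : n × n, star (M p.1 p.2) * N p.1 p.2 := by
    intro M N
    rw [Matrix.trace]
    simp only [Matrix.diag, Matrix.mul_apply, Matrix.conjTranspose_apply]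
    rw [Fintype.sum_prod_type]
    rw [Finset.sum_comm]
  have hsq : ∀ M : Matrix n n ℂ, (Mᴴ * M).trace.re = ∑ p : n × n, ‖M p.1 p.2‖ ^ 2 := by
    intro M
    rw [htr]
    rw [Complex.re_sum]
    congr 1; ext p
    rw [Complex.star_def, mul_comm, Complex.mul_conj]
    rw [Complex.ofReal_re, Complex.normSq_eq_norm_sq]
  calc ‖(Aᴴ * B).trace‖ ≤ ∑ p : n × n, ‖star (A p.1 p.2) * B p.1 p.2‖ := by
        rw [htr]; exact norm_sum_le _ _
    _ = ∑ p : n × n, ‖A p.1 p.2‖ * ‖B p.1 p.2‖ := by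
        congr 1; ext p; rw [norm_mul, norm_star]
    _ ≤ Real.sqrt (∑ p : n × n, ‖A p.1 p.2‖ ^ 2) * Real.sqrt (∑ p : n × n, ‖B p.1 p.2‖ ^ 2) :=
        Real.sum_mul_le_sqrt_mul_sqrt _ _ _
    _ = _ := by rw [hsq, hsq]

lemma eig_le_one {X : Matrix n n ℂ} (hX : X.PosSemidef) (hX1 : (1 - X).PosSemidef)
    (i : n) : hX.1.eigenvalues i ≤ 1 := by
  have h : (1 : Matrix n n ℂ) - X = fm hX.1 (fun x => 1 - x) := by
    rw [← fm_sub, fm_one, fm_id]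
  have := fm_eig_nonneg hX.1 (h ▸ hX1) i
  linarith

/-- A Hermitian matrix admits a "sign" contraction matrix realizing its trace norm. -/
lemma exists_sign_matrix {M : Matrix n n ℂ} (hM : M.IsHermitian) :
    ∃ S : Matrix n n ℂ, Sᴴ * S = 1 ∧ (S * M).trace = (traceNorm M : ℂ) := by
  classical
  set sgn : ℝ → ℝ := fun x => if x < 0 then -1 else 1 with hsgn
  refine ⟨fm hM sgn, ?_, ?_⟩
  · rw [(fm_isHermitian hM sgn).eq, fm_mul,
      fm_congr hM (g := fun _ => 1) (fun i => by by_cases h : hM.eigenvalues i < 0 <;>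
        simp [hsgn, h]), fm_one]
  · have hMM : Mᴴ * M = fm hM (fun x => x * x) := by
      conv_lhs => rw [hM.eq, ← fm_id hM]
      rw [fm_mul]
    have habs : fm hM (fun x => |x|) = (posSemidef_conjTranspose_mul_self M).sqrt := by
      refine (fm_posSemidef hM fun i => abs_nonneg _).eq_sqrt_of_sq_eq _ ?_
      rw [pow_two, fm_mul,
        fm_congr hM (g := fun x => x * x) (fun i => abs_mul_abs_self _), hMM]
    have hSM : fm hM sgn * M = fm hM (fun x => |x|) := by
      have h3 := fm_mul hM sgn (fun x => x)
      rw [fm_id] at h3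
      rw [h3]
      refine fm_congr hM fun i => ?_
      by_cases h : hM.eigenvalues i < 0
      · simp [hsgn, h, abs_of_neg h]
      · simp [hsgn, h, abs_of_nonneg (not_lt.mp h)]
    have h2 : (posSemidef_conjTranspose_mul_self M).sqrt.trace
        = ∑ i, ((|hM.eigenvalues i| : ℝ) : ℂ) := by rw [← habs, fm_trace]
    rw [hSM, fm_trace]
    unfold traceNorm
    rw [h2, Complex.re_sum]
    push_cast
    simp

/-- Real part of trace of a product, bounded by Cauchy–Schwarz. -/
lemma re_trace_le (C B : Matrix n n ℂ) :
    ((C * B).trace).re ≤ Real.sqrt ((C * Cᴴ).trace.re) * Real.sqrt ((Bᴴ * B).trace.re) := by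
  have hcs := trace_cs (Cᴴ) B
  rw [conjTranspose_conjTranspose] at hcs
  calc ((C * B).trace).re ≤ ‖(C * B).trace‖ := Complex.re_le_norm _
    _ ≤ _ := hcs

end GentleAux

open GentleAux in
/-- Gentle Measurement Lemma: for a density matrix `ρ` and `0 ⪯ X ⪯ I`,
`‖ρ − √X ρ √X‖₁ ≤ 2√(Tr(ρ(I − X)))`. -/
theorem stmt1 {n : ℕ} (ρ X : Matrix (Fin n) (Fin n) ℂ)
    (hρ : ρ.PosSemidef) (htr : ρ.trace = 1)
    (hX : X.PosSemidef) (hX1 : (1 - X).PosSemidef) :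
    traceNorm (ρ - hX.sqrt * ρ * hX.sqrt) ≤ 2 * Real.sqrt ((ρ * (1 - X)).trace.re) := by
  classical
  set P := hX.sqrt with hPdef
  set R := hρ.sqrt with hRdef
  have hPh : P.IsHermitian := hX.posSemidef_sqrt.1
  have hRh : R.IsHermitian := hρ.posSemidef_sqrt.1
  have hRR : R * R = ρ := hρ.sqrt_mul_self
  have hPP : P * P = X := hX.sqrt_mul_self
  have h1Ph : ((1 : Matrix (Fin n) (Fin n) ℂ) - P).IsHermitian := isHermitian_one.sub hPh
  have hMh : (ρ - P * ρ * P).IsHermitian := by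
    refine hρ.1.sub ?_
    have := (hρ.mul_mul_conjTranspose_same P).1
    rwa [hPh.eq] at this
  obtain ⟨S, hS, hStr⟩ := exists_sign_matrix hMh
  have hScancel : ∀ Z : Matrix (Fin n) (Fin n) ℂ, Sᴴ * (S * Z) = Z := fun Z => by
    rw [← mul_assoc, hS, one_mul]
  -- eigenvalue facts and the key Loewner inequalities
  have hPfm : P = fm hX.1 Real.sqrt := sqrt_eq_fm hX
  have h1P : (1 : Matrix (Fin n) (Fin n) ℂ) - P = fm hX.1 (fun x => 1 - Real.sqrt x) := by
    have := fm_sub hX.1 (fun _ => 1) Real.sqrt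
    rw [fm_one] at this
    rw [hPfm, this]
  have hkey : ((1 - X) - (1 - P) * (1 - P)).PosSemidef := by
    have h1X : (1 : Matrix (Fin n) (Fin n) ℂ) - X = fm hX.1 (fun x => 1 - x) := by
      have := fm_sub hX.1 (fun _ => 1) (fun x => x)
      rw [fm_one, fm_id] at this
      exact this
    rw [h1P, h1X, fm_mul, fm_sub]
    refine fm_posSemidef hX.1 fun i => ?_
    have h0 := hX.eigenvalues_nonneg i
    have h1 := eig_le_one hX hX1 i
    have hs := Real.sq_sqrt h0
    have hsn := Real.sqrt_nonneg (hX.1.eigenvalues i)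
    nlinarith [hs]
  -- trace quantities
  set t := (((1 : Matrix (Fin n) (Fin n) ℂ) - X) * ρ).trace.re with ht
  have ht0 : 0 ≤ t := trace_mul_psd_re hX1 hρ
  have htrρ : ((Rᴴ * R).trace).re = 1 := by
    rw [hRh.eq, hRR, htr]; simp
  have hQle : ((((1 - P) * (1 - P)) * ρ).trace).re ≤ t := trace_mono hkey hρ
  have hXle : (((X : Matrix (Fin n) (Fin n) ℂ) * ρ).trace).re ≤ 1 := by
    have := trace_mono (C := X) (D := 1) hX1 hρ
    rwa [one_mul, htr] at this
  -- the two terms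
  set C1 := S * ((1 - P) * R) with hC1def
  set C2 := S * (P * R) with hC2def
  have hterm1 : ((S * ((1 - P) * ρ)).trace).re ≤ Real.sqrt t := by
    have hcb : C1 * R = S * ((1 - P) * ρ) := by
      rw [hC1def, mul_assoc, mul_assoc, hRR]
    have hcc : ((C1 * C1ᴴ).trace).re = ((((1 - P) * (1 - P)) * ρ).trace).re := by
      rw [trace_mul_comm]
      have : C1ᴴ * C1 = R * ((1 - P) * ((1 - P) * R)) := by
        simp only [hC1def, conjTranspose_mul, mul_assoc, hScancel, h1Ph.eq, hRh.eq]
      rw [this, show R * ((1 - P) * ((1 - P) * R)) = R * ((1 - P) * (1 - P)) * R by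
        simp only [mul_assoc], trace_mul_cycle, hRR, trace_mul_comm]
    calc ((S * ((1 - P) * ρ)).trace).re ≤
        Real.sqrt ((C1 * C1ᴴ).trace.re) * Real.sqrt ((Rᴴ * R).trace.re) := by
          rw [← hcb]; exact re_trace_le C1 R
      _ ≤ Real.sqrt t * 1 := by
          rw [htrρ, Real.sqrt_one]
          exact mul_le_mul_of_nonneg_right
            (Real.sqrt_le_sqrt (hcc ▸ hQle)) zero_le_one
      _ = Real.sqrt t := mul_one _
  have hterm2 : ((S * (P * (ρ * (1 - P)))).trace).re ≤ Real.sqrt t := by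
    have hcb : C2 * (R * (1 - P)) = S * (P * (ρ * (1 - P))) := by
      rw [hC2def]
      simp only [mul_assoc, ← hRR]
    have hcc : ((C2 * C2ᴴ).trace).re = (((X : Matrix (Fin n) (Fin n) ℂ) * ρ).trace).re := by
      rw [trace_mul_comm]
      have : C2ᴴ * C2 = R * (P * (P * R)) := by
        simp only [hC2def, conjTranspose_mul, mul_assoc, hScancel, hPh.eq, hRh.eq]
      rw [this, show R * (P * (P * R)) = R * (P * P) * R by simp only [mul_assoc],
        trace_mul_cycle, hRR, hPP, trace_mul_comm]
    have hbb : (((R * (1 - P))ᴴ * (R * (1 - P))).trace).re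
        = ((((1 - P) * (1 - P)) * ρ).trace).re := by
      have : (R * (1 - P))ᴴ * (R * (1 - P)) = (1 - P) * ρ * (1 - P) := by
        simp only [conjTranspose_mul, h1Ph.eq, hRh.eq, ← mul_assoc]
        rw [mul_assoc (1 - P) R R, hRR]
      rw [this, trace_mul_cycle]
    calc ((S * (P * (ρ * (1 - P)))).trace).re ≤
        Real.sqrt ((C2 * C2ᴴ).trace.re) * Real.sqrt (((R * (1 - P))ᴴ * (R * (1 - P))).trace.re) := by
          rw [← hcb]; exact re_trace_le C2 (R * (1 - P))
      _ ≤ 1 * Real.sqrt t := by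
          refine mul_le_mul ?_ ?_ (Real.sqrt_nonneg _) zero_le_one
          · rw [hcc]
            calc Real.sqrt (((X : Matrix (Fin n) (Fin n) ℂ) * ρ).trace).re
                ≤ Real.sqrt 1 := Real.sqrt_le_sqrt hXle
              _ = 1 := Real.sqrt_one
          · rw [hbb]; exact Real.sqrt_le_sqrt hQle
      _ = Real.sqrt t := one_mul _
  -- assemble
  have hsplit : S * (ρ - P * ρ * P) = S * ((1 - P) * ρ) + S * (P * (ρ * (1 - P))) := by
    noncomm_ring
  have hre : traceNorm (ρ - P * ρ * P) = ((S * (ρ - P * ρ * P)).trace).re := by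
    rw [hStr, Complex.ofReal_re]
  rw [hre, hsplit, trace_add, Complex.add_re]
  have hgoal : ((ρ * (1 - X)).trace).re = t := by
    rw [trace_mul_comm]
  rw [hgoal]
  linarith [hterm1, hterm2]
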